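/- Let Y_1, Y_2, J be real d×M matrices such that every column j_k of J satisfies ‖j_k‖ ≤ G (G ≥ 0), and let w ∈ Δ_M. Then ‖Y_1ᵀ Y_2 w‖ ≤ ‖Y_1 − J‖_op · ‖(Y_2 − J)w‖ + √M · G · ‖(Y_2 − J)w‖ + G · ‖Y_1 − J‖_op + √M · G². -/

import Mathlib

open scoped BigOperators Matrix

/-- Euclidean norm of a vector in `ℝ^n`. -/
noncomputable def eNorm {n : ℕ} (v : Fin n → ℝ) : ℝ :=
  Real.sqrt (∑ i, v i ^ 2)

/-- Operator norm of a real `d × M` matrix with respect to Euclidean norms. -/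
noncomputable def opNorm {d M : ℕ} (A : Matrix (Fin d) (Fin M) ℝ) : ℝ :=
  ‖LinearMap.toContinuousLinearMap (Matrix.toEuclideanLin A)‖

open scoped Matrix.Norms.L2Operator

section Aux
variable {n m : ℕ}

/-- `eNorm` is the Euclidean-space norm. -/
lemma eNorm_eq (v : Fin n → ℝ) :
    eNorm v = ‖(WithLp.equiv 2 (Fin n → ℝ)).symm v‖ := by
  simp [eNorm, EuclideanSpace.norm_eq, Real.norm_eq_abs, sq_abs]

lemma opNorm_eq (A : Matrix (Fin m) (Fin n) ℝ) : opNorm A = ‖A‖ := rfl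

lemma eNorm_mulVec_le (A : Matrix (Fin m) (Fin n) ℝ) (v : Fin n → ℝ) :
    eNorm (A.mulVec v) ≤ ‖A‖ * eNorm v := by
  rw [eNorm_eq, eNorm_eq]
  exact Matrix.l2_opNorm_mulVec A ((WithLp.equiv 2 (Fin n → ℝ)).symm v)

lemma transpose_norm (A : Matrix (Fin m) (Fin n) ℝ) : ‖Aᵀ‖ = ‖A‖ := by
  rw [show Aᵀ = Aᴴ by ext i j; simp [Matrix.conjTranspose]]
  exact Matrix.l2_opNorm_conjTranspose A

end Aux

section Aux2
variable {n m : ℕ}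

lemma eNorm_nonneg (v : Fin n → ℝ) : 0 ≤ eNorm v := Real.sqrt_nonneg _

/-- Column bound gives `‖Jᵀ v‖ ≤ √M G ‖v‖`. -/
lemma transpose_col_bound {G : ℝ} (hG : 0 ≤ G) (J : Matrix (Fin m) (Fin n) ℝ)
    (hJ : ∀ k : Fin n, eNorm (fun i => J i k) ≤ G) (v : Fin m → ℝ) :
    eNorm (Jᵀ.mulVec v) ≤ Real.sqrt n * G * eNorm v := by
  have hcol : ∀ k : Fin n, (∑ i, J i k ^ 2) ≤ G ^ 2 := by
    intro k
    have h1 := hJ k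
    have h2 : (0:ℝ) ≤ ∑ i, J i k ^ 2 := Finset.sum_nonneg fun i _ => sq_nonneg _
    calc (∑ i, J i k ^ 2) = eNorm (fun i => J i k) ^ 2 := by
          rw [eNorm, Real.sq_sqrt h2]
      _ ≤ G ^ 2 := by
          have := eNorm_nonneg (fun i => J i k)
          nlinarith
  have hterm : ∀ k : Fin n, (Jᵀ.mulVec v k) ^ 2 ≤ G ^ 2 * (∑ i, v i ^ 2) := by
    intro k
    have := Finset.sum_mul_sq_le_sq_mul_sq Finset.univ (fun i => J i k) v
    have h2 : (0:ℝ) ≤ ∑ i, v i ^ 2 := Finset.sum_nonneg fun i _ => sq_nonneg _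
    calc (Jᵀ.mulVec v k) ^ 2 = (∑ i, J i k * v i) ^ 2 := by
          simp [Matrix.mulVec, dotProduct, Matrix.transpose, mul_comm]
      _ ≤ (∑ i, J i k ^ 2) * (∑ i, v i ^ 2) := this
      _ ≤ G ^ 2 * (∑ i, v i ^ 2) := by
          exact mul_le_mul_of_nonneg_right (hcol k) h2
  have hsum : (∑ k, Jᵀ.mulVec v k ^ 2) ≤ n * (G ^ 2 * (∑ i, v i ^ 2)) := by
    calc (∑ k : Fin n, Jᵀ.mulVec v k ^ 2) ≤ ∑ k : Fin n, G ^ 2 * (∑ i, v i ^ 2) :=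
          Finset.sum_le_sum fun k _ => hterm k
      _ = n * (G ^ 2 * (∑ i, v i ^ 2)) := by simp [mul_comm]
  rw [eNorm, eNorm]
  calc Real.sqrt (∑ k, Jᵀ.mulVec v k ^ 2)
      ≤ Real.sqrt ((n : ℝ) * (G ^ 2 * (∑ i, v i ^ 2))) := Real.sqrt_le_sqrt hsum
    _ = Real.sqrt n * G * Real.sqrt (∑ i, v i ^ 2) := by
        rw [Real.sqrt_mul (Nat.cast_nonneg n), Real.sqrt_mul (by positivity : (0:ℝ) ≤ G ^ 2),
          Real.sqrt_sq hG, mul_assoc]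

end Aux2

section Aux3
variable {n m : ℕ}

lemma eNorm_mulVec_simplex_le {G : ℝ} (J : Matrix (Fin m) (Fin n) ℝ)
    (hJ : ∀ k : Fin n, eNorm (fun i => J i k) ≤ G)
    (w : Fin n → ℝ) (hw : w ∈ stdSimplex ℝ (Fin n)) :
    eNorm (J.mulVec w) ≤ G := by
  obtain ⟨hw0, hw1⟩ := hw
  have key : (WithLp.equiv 2 (Fin m → ℝ)).symm (J.mulVec w)
      = ∑ k, w k • (WithLp.equiv 2 (Fin m → ℝ)).symm (fun i => J i k) := by
    ext i
    simp [Matrix.mulVec, dotProduct, mul_comm]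
  rw [eNorm_eq, key]
  calc ‖∑ k, w k • (WithLp.equiv 2 (Fin m → ℝ)).symm (fun i => J i k)‖
      ≤ ∑ k, ‖w k • (WithLp.equiv 2 (Fin m → ℝ)).symm (fun i => J i k)‖ :=
        norm_sum_le _ _
    _ ≤ ∑ k, w k * G := by
        refine Finset.sum_le_sum fun k _ => ?_
        rw [norm_smul, Real.norm_eq_abs, abs_of_nonneg (hw0 k)]
        exact mul_le_mul_of_nonneg_left (by rw [← eNorm_eq]; exact hJ k) (hw0 k)
    _ = G := by rw [← Finset.sum_mul, hw1, one_mul]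

end Aux3

/-- For real `d × M` matrices `Y₁, Y₂, J` with every column `jₖ` of `J`
satisfying `‖jₖ‖ ≤ G` (`G ≥ 0`) and `w ∈ Δ_M`:
`‖Y₁ᵀ Y₂ w‖ ≤ ‖Y₁ − J‖_op ‖(Y₂ − J)w‖ + √M G ‖(Y₂ − J)w‖ + G ‖Y₁ − J‖_op + √M G²`. -/
theorem stmt9 {d M : ℕ} {G : ℝ} (hG : 0 ≤ G)
    (Y₁ Y₂ J : Matrix (Fin d) (Fin M) ℝ)
    (hJ : ∀ k : Fin M, eNorm (fun i => J i k) ≤ G)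
    (w : Fin M → ℝ) (hw : w ∈ stdSimplex ℝ (Fin M)) :
    eNorm ((Y₁ᵀ * Y₂).mulVec w) ≤
      opNorm (Y₁ - J) * eNorm ((Y₂ - J).mulVec w)
        + Real.sqrt M * G * eNorm ((Y₂ - J).mulVec w)
        + G * opNorm (Y₁ - J)
        + Real.sqrt M * G ^ 2 := by
  set A := Y₁ - J
  set B := Y₂ - J
  have hM : Y₁ᵀ * Y₂ = Aᵀ * B + Jᵀ * B + Aᵀ * J + Jᵀ * J := by
    ext i j
    simp only [A, B, Matrix.add_apply, Matrix.mul_apply, Matrix.transpose_apply,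
      Matrix.sub_apply, sub_mul, mul_sub, Finset.sum_sub_distrib]
    ring
  have hdecomp : (Y₁ᵀ * Y₂).mulVec w =
      Aᵀ.mulVec (B.mulVec w) + Jᵀ.mulVec (B.mulVec w)
        + Aᵀ.mulVec (J.mulVec w) + Jᵀ.mulVec (J.mulVec w) := by
    simp only [Matrix.mulVec_mulVec]
    rw [hM, Matrix.add_mulVec, Matrix.add_mulVec, Matrix.add_mulVec]
  have tri : ∀ u v : Fin M → ℝ, eNorm (u + v) ≤ eNorm u + eNorm v := by
    intro u v
    simp only [eNorm_eq]
    exact norm_add_le _ _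
  have hJw : eNorm (J.mulVec w) ≤ G := eNorm_mulVec_simplex_le J hJ w hw
  have h1 : eNorm (Aᵀ.mulVec (B.mulVec w)) ≤ opNorm A * eNorm (B.mulVec w) := by
    rw [opNorm_eq, ← transpose_norm]
    exact eNorm_mulVec_le _ _
  have h2 : eNorm (Jᵀ.mulVec (B.mulVec w)) ≤ Real.sqrt M * G * eNorm (B.mulVec w) :=
    transpose_col_bound hG J hJ _
  have h3 : eNorm (Aᵀ.mulVec (J.mulVec w)) ≤ G * opNorm A := by
    rw [opNorm_eq, ← transpose_norm]
    calc eNorm (Aᵀ.mulVec (J.mulVec w)) ≤ ‖Aᵀ‖ * eNorm (J.mulVec w) := eNorm_mulVec_le _ _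
      _ ≤ ‖Aᵀ‖ * G := mul_le_mul_of_nonneg_left hJw (norm_nonneg _)
      _ = G * ‖Aᵀ‖ := mul_comm _ _
  have h4 : eNorm (Jᵀ.mulVec (J.mulVec w)) ≤ Real.sqrt M * G ^ 2 := by
    calc eNorm (Jᵀ.mulVec (J.mulVec w)) ≤ Real.sqrt M * G * eNorm (J.mulVec w) :=
          transpose_col_bound hG J hJ _
      _ ≤ Real.sqrt M * G * G := by
          exact mul_le_mul_of_nonneg_left hJw (by positivity)
      _ = Real.sqrt M * G ^ 2 := by ring
  calc eNorm ((Y₁ᵀ * Y₂).mulVec w)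
      ≤ eNorm (Aᵀ.mulVec (B.mulVec w)) + eNorm (Jᵀ.mulVec (B.mulVec w))
        + eNorm (Aᵀ.mulVec (J.mulVec w)) + eNorm (Jᵀ.mulVec (J.mulVec w)) := by
        rw [hdecomp]
        refine le_trans (tri _ _) (add_le_add (le_trans (tri _ _)
          (add_le_add (tri _ _) le_rfl)) le_rfl)
    _ ≤ _ := add_le_add (add_le_add (add_le_add h1 h2) h3) h4
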